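/- Let C be an n×n real symmetric positive-semidefinite matrix and let 0 < s < n be an integer with s < rank(C). Then the scaled linx bound tends to +∞ as the scaling parameter tends to +∞: lim_{γ→+∞} linx(C,s;γ) = +∞. -/

import Mathlib

open Matrix Real Set Filter

noncomputable section

/-- The feasible polytope `P(n,s)`. -/
def PP (n s : ℕ) : Set (Fin n → ℝ) :=
  {x | (∑ i, x i) = (s : ℝ) ∧ ∀ i, 0 ≤ x i ∧ x i ≤ 1}

/-- The scaled linx objective `f(C,s;γ;x)`. -/
def fLinxScaled {n : ℕ} (C : Matrix (Fin n) (Fin n) ℝ) (s : ℕ) (γ : ℝ) (x : Fin n → ℝ) : ℝ :=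
  (1 / 2) * (Real.log ((γ • (C * Matrix.diagonal x * C) + Matrix.diagonal fun i => 1 - x i).det)
    - (s : ℝ) * Real.log γ)

/-- The scaled linx bound `linx(C,s;γ)`. -/
def linxScaled (n s : ℕ) (C : Matrix (Fin n) (Fin n) ℝ) (γ : ℝ) : ℝ :=
  sSup (fLinxScaled C s γ '' PP n s)

lemma PP_compact (n s : ℕ) : IsCompact (PP n s) := by
  have hPPeq : PP n s = {x : Fin n → ℝ | (∑ i, x i) = (s : ℝ)} ∩ Set.Icc 0 1 := by
    ext x
    simp [PP, Set.mem_Icc, Pi.le_def, forall_and]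
  have hcl : IsClosed (PP n s) := by
    rw [hPPeq]
    exact (isClosed_eq (continuous_finset_sum _ fun i _ => continuous_apply i)
      continuous_const).inter isClosed_Icc
  have hsub : PP n s ⊆ Set.Icc (0 : Fin n → ℝ) 1 := by
    rw [hPPeq]; exact Set.inter_subset_right
  exact isCompact_Icc.of_isClosed_subset hcl hsub

lemma linx_bddAbove (n s : ℕ) (C : Matrix (Fin n) (Fin n) ℝ) (γ : ℝ) :
    BddAbove (fLinxScaled C s γ '' PP n s) := by
  have hcont : Continuous fun x : Fin n → ℝ =>
      ((γ • (C * Matrix.diagonal x * C) + Matrix.diagonal fun i => 1 - x i)).det := by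
    apply Continuous.matrix_det
    apply Continuous.add
    · exact ((continuous_const.matrix_mul (Continuous.matrix_diagonal continuous_id)).matrix_mul
        continuous_const).const_smul γ
    · exact Continuous.matrix_diagonal (by fun_prop)
  obtain ⟨M, hM⟩ := (PP_compact n s).exists_bound_of_continuousOn hcont.continuousOn
  refine ⟨(1 / 2) * (Real.log (max M 1) - (s : ℝ) * Real.log γ), ?_⟩
  rintro y ⟨x, hx, rfl⟩
  have h1 : Real.log ((γ • (C * Matrix.diagonal x * C)
      + Matrix.diagonal fun i => 1 - x i).det) ≤ Real.log (max M 1) := by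
    set d := (γ • (C * Matrix.diagonal x * C) + Matrix.diagonal fun i => 1 - x i).det with hd
    have habs : |d| ≤ max M 1 := le_trans ((Real.norm_eq_abs d) ▸ hM x hx) (le_max_left _ _)
    rcases eq_or_ne d 0 with h0 | h0
    · rw [h0, Real.log_zero]
      exact Real.log_nonneg (le_max_right _ _)
    · rw [← Real.log_abs]
      exact Real.log_le_log (abs_pos.2 h0) habs
  have : (0:ℝ) < 1/2 := by norm_num
  unfold fLinxScaled
  nlinarith [h1]

theorem stmt_17 (n s : ℕ) (hs : 0 < s) (hsn : s < n)
    (C : Matrix (Fin n) (Fin n) ℝ) (hC : C.PosSemidef) (hrank : s < C.rank) :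
    Filter.Tendsto (fun γ : ℝ => linxScaled n s C γ)
      Filter.atTop Filter.atTop := by
  have hn : (0:ℝ) < n := by exact_mod_cast hs.trans hsn
  set a : ℝ := (s : ℝ) / n with ha_def
  have ha : 0 < a := div_pos (by exact_mod_cast hs) hn
  have ha1 : a < 1 := (div_lt_one hn).2 (by exact_mod_cast hsn)
  set c : ℝ := 1 - a with hc_def
  have hc : 0 < c := by simp only [hc_def]; linarith
  set x₀ : Fin n → ℝ := fun _ => a with hx₀_def
  have hx₀ : x₀ ∈ PP n s := by
    constructor
    · simp only [hx₀_def, Finset.sum_const, Finset.card_univ, Fintype.card_fin, nsmul_eq_mul,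
        ha_def]
      field_simp
    · exact fun i => ⟨ha.le, ha1.le⟩
  have hA := hC.1
  set lam := hA.eigenvalues with hlam
  set U : Matrix (Fin n) (Fin n) ℝ := (hA.eigenvectorUnitary : Matrix (Fin n) (Fin n) ℝ)
    with hU_def
  have hU1 : U * star U = 1 := Matrix.mem_unitaryGroup_iff.mp (hA.eigenvectorUnitary).2
  have hU2 : star U * U = 1 := Matrix.mem_unitaryGroup_iff'.mp (hA.eigenvectorUnitary).2
  have hCeq : C = U * Matrix.diagonal lam * star U := by
    have h := hA.spectral_theorem
    simpa [hU_def, hlam] using h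
  -- the determinant formula
  have hdet : ∀ γ : ℝ, (γ • (C * Matrix.diagonal x₀ * C)
      + Matrix.diagonal fun i => 1 - x₀ i).det = ∏ i, (γ * (a * lam i ^ 2) + c) := by
    intro γ
    have hd1 : Matrix.diagonal x₀ = a • (1 : Matrix (Fin n) (Fin n) ℝ) :=
      (Matrix.smul_one_eq_diagonal a).symm
    have hd2 : (Matrix.diagonal fun i => 1 - x₀ i) = c • (1 : Matrix (Fin n) (Fin n) ℝ) := by
      rw [Matrix.smul_one_eq_diagonal]
    set D : Matrix (Fin n) (Fin n) ℝ := Matrix.diagonal lam with hD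
    have hmid : C * Matrix.diagonal x₀ * C = U * (a • (D * D)) * star U := by
      rw [hd1, Matrix.mul_smul, mul_one, Matrix.smul_mul, hCeq]
      rw [show U * D * star U * (U * D * star U) = U * D * (star U * U) * D * star U by
        simp only [mul_assoc]]
      rw [hU2, mul_one]
      simp only [Matrix.smul_mul, Matrix.mul_smul, mul_assoc]
    have hkey : γ • (C * Matrix.diagonal x₀ * C) + Matrix.diagonal (fun i => 1 - x₀ i)
        = U * Matrix.diagonal (fun i => γ * (a * lam i ^ 2) + c) * star U := by
      rw [hmid, hd2]
      have hdiag : Matrix.diagonal (fun i => γ * (a * lam i ^ 2) + c)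
          = γ • (a • (D * D)) + c • (1 : Matrix (Fin n) (Fin n) ℝ) := by
        rw [hD, Matrix.diagonal_mul_diagonal]
        ext i j
        rcases eq_or_ne i j with rfl | h
        · simp only [Matrix.add_apply, Matrix.smul_apply, Matrix.diagonal_apply_eq,
            Matrix.one_apply_eq, smul_eq_mul]
          ring
        · simp [Matrix.diagonal_apply_ne _ h, Matrix.one_apply_ne h]
      rw [hdiag, Matrix.mul_add, Matrix.add_mul]
      congr 1
      · simp only [Matrix.mul_smul, Matrix.smul_mul]
      · rw [Matrix.mul_smul, mul_one, Matrix.smul_mul, hU1]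
    rw [hkey, Matrix.det_mul, Matrix.det_mul, Matrix.det_diagonal]
    have hdetU : U.det * (star U).det = 1 := by rw [← Matrix.det_mul, hU1, Matrix.det_one]
    rw [mul_comm U.det, mul_assoc, hdetU, mul_one]
  -- rank and eigenvalue counting
  set T : Finset (Fin n) := Finset.univ.filter (fun i => lam i ≠ 0) with hT
  have hcardT : T.card = C.rank := by
    rw [hA.rank_eq_card_non_zero_eigs, Fintype.card_subtype]
  have hsr : s < T.card := hcardT ▸ hrank
  have hTn : T.card ≤ n := by simpa using T.card_le_univ
  set K : ℝ := (∑ i ∈ T, Real.log (a * lam i ^ 2)) + ((n : ℝ) - T.card) * Real.log c with hK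
  -- lower bound on the objective at x₀
  have hlow : ∀ γ : ℝ, 1 ≤ γ →
      (1 / 2) * (((T.card : ℝ) - s) * Real.log γ + K) ≤ linxScaled n s C γ := by
    intro γ hγ
    have hγ0 : (0:ℝ) < γ := lt_of_lt_of_le one_pos hγ
    have hpos : ∀ i : Fin n, 0 < γ * (a * lam i ^ 2) + c := by
      intro i
      have h1 : 0 ≤ γ * (a * lam i ^ 2) :=
        mul_nonneg hγ0.le (mul_nonneg ha.le (sq_nonneg _))
      linarith
    have hlogprod : Real.log (∏ i, (γ * (a * lam i ^ 2) + c))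
        = ∑ i, Real.log (γ * (a * lam i ^ 2) + c) :=
      Real.log_prod (fun i _ => (hpos i).ne')
    have hsplit : ∑ i, Real.log (γ * (a * lam i ^ 2) + c)
        = (∑ i ∈ T, Real.log (γ * (a * lam i ^ 2) + c))
          + ∑ i ∈ Finset.univ.filter (fun i => ¬ lam i ≠ 0),
              Real.log (γ * (a * lam i ^ 2) + c) := by
      rw [hT, Finset.sum_filter_add_sum_filter_not]
    have hbound1 : ∀ i ∈ T, Real.log γ + Real.log (a * lam i ^ 2)
        ≤ Real.log (γ * (a * lam i ^ 2) + c) := by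
      intro i hi
      have hne : lam i ≠ 0 := by
        simp only [hT, Finset.mem_filter] at hi
        exact hi.2
      have hpos2 : 0 < a * lam i ^ 2 :=
        mul_pos ha (by positivity)
      have h3 : 0 < γ * (a * lam i ^ 2) := mul_pos hγ0 hpos2
      calc Real.log γ + Real.log (a * lam i ^ 2) = Real.log (γ * (a * lam i ^ 2)) :=
            (Real.log_mul hγ0.ne' hpos2.ne').symm
        _ ≤ Real.log (γ * (a * lam i ^ 2) + c) := Real.log_le_log h3 (by linarith)
    have hbound2 : ∀ i ∈ Finset.univ.filter (fun i => ¬ lam i ≠ 0),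
        Real.log (γ * (a * lam i ^ 2) + c) = Real.log c := by
      intro i hi
      simp only [Finset.mem_filter, not_not] at hi
      rw [hi.2]
      ring_nf
    have hcard2 : (Finset.univ.filter (fun i => ¬ lam i ≠ 0)).card = n - T.card := by
      have := Finset.card_filter_add_card_filter_not
        (s := (Finset.univ : Finset (Fin n))) (p := fun i => lam i ≠ 0)
      simp only [Finset.card_univ, Fintype.card_fin] at this
      rw [hT]
      omega
    have hsum1 : ∑ i ∈ T, (Real.log γ + Real.log (a * lam i ^ 2))
        = (T.card : ℝ) * Real.log γ + ∑ i ∈ T, Real.log (a * lam i ^ 2) := by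
      rw [Finset.sum_add_distrib, Finset.sum_const, nsmul_eq_mul]
    have hsum2 : ∑ i ∈ Finset.univ.filter (fun i => ¬ lam i ≠ 0),
        Real.log (γ * (a * lam i ^ 2) + c) = ((n : ℝ) - T.card) * Real.log c := by
      rw [Finset.sum_congr rfl hbound2, Finset.sum_const, nsmul_eq_mul, hcard2]
      congr 1
      have : (↑(n - T.card) : ℝ) = (n : ℝ) - T.card := by
        push_cast [Nat.cast_sub hTn]
        ring
      exact this
    have hlogdet : (T.card : ℝ) * Real.log γ + K
        ≤ Real.log (∏ i, (γ * (a * lam i ^ 2) + c)) := by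
      rw [hlogprod, hsplit, hsum2, hK]
      have h₁ : (T.card : ℝ) * Real.log γ + ∑ i ∈ T, Real.log (a * lam i ^ 2)
          ≤ ∑ i ∈ T, Real.log (γ * (a * lam i ^ 2) + c) := by
        rw [← hsum1]
        exact Finset.sum_le_sum hbound1
      linarith
    have hfval : (1 / 2) * (((T.card : ℝ) - s) * Real.log γ + K)
        ≤ fLinxScaled C s γ x₀ := by
      unfold fLinxScaled
      rw [hdet γ]
      nlinarith [hlogdet]
    refine le_trans hfval ?_
    exact le_csSup (linx_bddAbove n s C γ) (Set.mem_image_of_mem _ hx₀)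
  -- conclusion
  have hdiff : (0:ℝ) < (T.card : ℝ) - s := by
    have : (s:ℝ) < T.card := by exact_mod_cast hsr
    linarith
  have hg : Filter.Tendsto (fun γ : ℝ => (1 / 2) * (((T.card : ℝ) - s) * Real.log γ + K))
      Filter.atTop Filter.atTop := by
    apply Filter.Tendsto.const_mul_atTop (by norm_num : (0:ℝ) < 1/2)
    exact tendsto_atTop_add_const_right _ K
      (Filter.Tendsto.const_mul_atTop hdiff Real.tendsto_log_atTop)
  exact tendsto_atTop_mono' _ (by
    filter_upwards [Filter.eventually_ge_atTop (1:ℝ)] with γ hγ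
    exact hlow γ hγ) hg
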